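/- Let g be integrable on the torus and define, for Fourier coefficients {g_{n,k}}, the interaction of the four range conditions for an even-order tensor m = 2q: oddness (g_{n,k} = 0 for even n), conjugacy (g_{-n,-k} = conj g_{n,k}), symmetry (g_{n,k} = (−1)^{n+k} g_{n+2k,−k}), and moments (g_{n,k} = (−1)^k g_{n+2k,−k} for odd n ≤ −(m+1) and k ≤ 0). Then for all odd n ≤ −1: g_{n,k} = 0 if (n,k) ∈ W; g_{n,k} = (−1)^{1+k} conj(g_{−n−2k,k}) if (n,k) ∈ G; and g_{n,k} = (−1)^{1+k} g_{n+2k,−k} if (n,k) ∈ R; where W = {odd n ≤ −m−1, 0 ≤ k ≤ −(n+m+1)/2} ∪ {odd n ≤ −m−1, k ≤ 0}, G = {odd n ≤ −1, (−n+1)/2 ≤ k ≤ −n} ∪ {odd n ≤ −1, k > −n}, and R = {odd n ≤ −1, −(n+m−1)/2 ≤ k ≤ −(n+1)/2} ∪ {odd −m+1 ≤ n ≤ −1, k ≤ 0} (R is empty if m = 0). -/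
import Mathlib


/-- Algebraic interaction of the four range conditions for an even order tensor `m = 2q`:
oddness, conjugacy, symmetry, and moment conditions imply that for all odd `n ≤ -1` the
coefficients vanish on the white region `W`, satisfy the conjugate-reflection formula
on the green region `G`, and the reflection formula on the red region `R`. -/
theorem stmt_16 (q : ℕ) (m : ℤ) (hm : m = 2 * q) (g : ℤ → ℤ → ℂ)
    (hodd : ∀ n k : ℤ, Even n → g n k = 0)
    (hconj : ∀ n k : ℤ, g (-n) (-k) = starRingEnd ℂ (g n k))
    (hsymm : ∀ n k : ℤ, g n k = (-1 : ℂ) ^ (n + k) * g (n + 2 * k) (-k))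
    (hmom : ∀ n k : ℤ, Odd n → n ≤ -(m + 1) → k ≤ 0 →
      g n k = (-1 : ℂ) ^ k * g (n + 2 * k) (-k)) :
    ∀ n k : ℤ, Odd n → n ≤ -1 →
      -- white region W = W⁺ ∪ W⁻
      (((n ≤ -m - 1 ∧ 0 ≤ k ∧ 2 * k ≤ -(n + m + 1)) ∨ (n ≤ -m - 1 ∧ k ≤ 0)) →
        g n k = 0) ∧
      -- green region G = G_L ∪ G_R
      ((((-n + 1 ≤ 2 * k ∧ k ≤ -n)) ∨ (-n < k)) →
        g n k = (-1 : ℂ) ^ (1 + k) * starRingEnd ℂ (g (-n - 2 * k) k)) ∧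
      -- red region R = R⁺ ∪ R⁻
      (((-(n + m - 1) ≤ 2 * k ∧ 2 * k ≤ -(n + 1)) ∨ (-m + 1 ≤ n ∧ k ≤ 0)) →
        g n k = (-1 : ℂ) ^ (1 + k) * g (n + 2 * k) (-k)) := by
  have hne : (-1 : ℂ) ≠ 0 := by norm_num
  -- sign computation for odd n
  have hsign : ∀ n k : ℤ, Odd n → (-1 : ℂ) ^ (n + k) = -((-1 : ℂ) ^ k) := by
    intro n k hn
    rw [zpow_add₀ hne, hn.neg_one_zpow, neg_one_mul]
  have hsign1 : ∀ k : ℤ, (-1 : ℂ) ^ (1 + k) = -((-1 : ℂ) ^ k) := by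
    intro k
    rw [zpow_add₀ hne, zpow_one, neg_one_mul]
  -- white region, lower part
  have hW : ∀ n k : ℤ, Odd n → n ≤ -m - 1 → k ≤ 0 → g n k = 0 := by
    intro n k hn hnm hk
    have h1 := hsymm n k
    have h2 := hmom n k hn (by linarith) hk
    rw [hsign n k hn] at h1
    linear_combination (h1 + h2) / 2
  intro n k hn hn1
  refine ⟨?_, ?_, ?_⟩
  · rintro (⟨h1, h2, h3⟩ | ⟨h1, h2⟩)
    · have hz : g (n + 2 * k) (-k) = 0 :=
        hW (n + 2 * k) (-k) (by simpa using hn.add_even (even_two_mul k))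
          (by linarith) (by linarith)
      rw [hsymm n k, hz, mul_zero]
    · exact hW n k hn h1 h2
  · intro _
    have h := hsymm n k
    rw [hsign n k hn] at h
    rw [← hsign1 k] at h
    rw [h]
    congr 1
    have := hconj (-n - 2 * k) k
    rw [show -(-n - 2 * k) = n + 2 * k by ring] at this
    exact this
  · intro _
    rw [hsymm n k, hsign n k hn, hsign1 k]
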